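/- For each ε > 0 and integer k ≥ 1 there exists δ > 0 with the following two properties. (i) For every P-variable W and every μ ∈ S_k(W) with d_LP(μ, M_k) ≤ δ, there exists μ₂ ∈ S'_k(W) with d_LP(μ,μ₂) ≤ ε. (ii) For any two P-variables W and U with d_H(S_k(W), S_k(U)) ≤ δ/2, one has d_H(S'_k(W), S'_k(U)) ≤ 2ε + d_H(S_k(W), S_k(U)). -/

import Mathlib

set_option autoImplicit false

open MeasureTheory Set
open scoped ENNReal NNReal

noncomputable section

/-- `ℝ^n` with the Euclidean metric. -/
abbrev RE (n : ℕ) : Type := EuclideanSpace ℝ (Fin n)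

/-- The random vector `(f₁(x₁), f₁(x₂), …, f_k(x₁), f_k(x₂), W(x₁,x₂,x₁₂))`. -/
def sVec {Ω₁ Ω₂ : Type*} (k : ℕ) (f : Fin k → Ω₁ → ℝ)
    (W : Ω₁ × Ω₁ × Ω₂ → ℝ) (x : Ω₁ × Ω₁ × Ω₂) : RE (2 * k + 1) :=
  (WithLp.equiv 2 (Fin (2 * k + 1) → ℝ)).symm fun i =>
    if _ : (i : ℕ) < 2 * k then
      if (i : ℕ) % 2 = 0 then f ⟨(i : ℕ) / 2, by omega⟩ x.1
      else f ⟨(i : ℕ) / 2, by omega⟩ x.2.1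
    else W x

/-- `S(f₁,…,f_k,W)`: the pushforward of the product measure `P₁ ⊗ P₁ ⊗ P₂` under `sVec`. -/
def Smeasure {Ω₁ Ω₂ : Type*} [MeasurableSpace Ω₁] [MeasurableSpace Ω₂]
    (P₁ : Measure Ω₁) (P₂ : Measure Ω₂) {k : ℕ} (f : Fin k → Ω₁ → ℝ)
    (W : Ω₁ × Ω₁ × Ω₂ → ℝ) : Measure (RE (2 * k + 1)) :=
  (P₁.prod (P₁.prod P₂)).map (sVec k f W)

/-- The `k`-profile `S_k(W)`. -/
def SkSet {Ω₁ Ω₂ : Type*} [MeasurableSpace Ω₁] [MeasurableSpace Ω₂]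
    (P₁ : Measure Ω₁) (P₂ : Measure Ω₂) (k : ℕ)
    (W : Ω₁ × Ω₁ × Ω₂ → ℝ) : Set (Measure (RE (2 * k + 1))) :=
  {μ | ∃ f : Fin k → Ω₁ → ℝ, (∀ i, Measurable (f i)) ∧
    (∀ i x, f i x ∈ Icc (-1 : ℝ) 1) ∧ μ = Smeasure P₁ P₂ f W}

/-- A function partition: `{0,1}`-valued measurable functions summing to `1`. -/
def IsFunctionPartition {Ω₁ : Type*} [MeasurableSpace Ω₁] {k : ℕ}
    (f : Fin k → Ω₁ → ℝ) : Prop :=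
  (∀ i, Measurable (f i)) ∧ (∀ i x, f i x = 0 ∨ f i x = 1) ∧ ∀ x, ∑ i, f i x = 1

/-- The restricted `k`-profile `S'_k(W)`. -/
def SkSet' {Ω₁ Ω₂ : Type*} [MeasurableSpace Ω₁] [MeasurableSpace Ω₂]
    (P₁ : Measure Ω₁) (P₂ : Measure Ω₂) (k : ℕ)
    (W : Ω₁ × Ω₁ × Ω₂ → ℝ) : Set (Measure (RE (2 * k + 1))) :=
  {μ | ∃ f : Fin k → Ω₁ → ℝ, IsFunctionPartition f ∧ μ = Smeasure P₁ P₂ f W}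

/-- Hausdorff edistance (w.r.t. the Lévy–Prokhorov distance) between sets of measures. -/
def eHausLP {X : Type*} [MeasurableSpace X] [PseudoEMetricSpace X]
    (A B : Set (Measure X)) : ℝ≥0∞ :=
  max (⨆ μ ∈ A, ⨅ ν ∈ B, levyProkhorovEDist μ ν)
      (⨆ ν ∈ B, ⨅ μ ∈ A, levyProkhorovEDist μ ν)

/-- Hausdorff distance (w.r.t. the Lévy–Prokhorov distance) between sets of measures. -/
def dHLP {X : Type*} [MeasurableSpace X] [PseudoEMetricSpace X]
    (A B : Set (Measure X)) : ℝ := (eHausLP A B).toReal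

/-- A `P`-variable: a measurable real-valued function on a product `Ω₁ × Ω₁ × Ω₂`
of probability spaces. -/
structure PVar where
  (Ω₁ : Type*)
  (Ω₂ : Type*)
  [m₁ : MeasurableSpace Ω₁]
  [m₂ : MeasurableSpace Ω₂]
  (P₁ : Measure Ω₁)
  (P₂ : Measure Ω₂)
  (prob₁ : IsProbabilityMeasure P₁)
  (prob₂ : IsProbabilityMeasure P₂)
  (W : Ω₁ × Ω₁ × Ω₂ → ℝ)
  (meas : Measurable W)

attribute [instance] PVar.m₁ PVar.m₂

/-- The underlying product probability measure of a `P`-variable. -/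
def PVar.vol (V : PVar) : Measure (V.Ω₁ × V.Ω₁ × V.Ω₂) := V.P₁.prod (V.P₁.prod V.P₂)

/-- The `k`-profile of a `P`-variable. -/
def PVar.Sk (V : PVar) (k : ℕ) : Set (Measure (RE (2 * k + 1))) := SkSet V.P₁ V.P₂ k V.W

/-- The restricted `k`-profile of a `P`-variable. -/
def PVar.Sk' (V : PVar) (k : ℕ) : Set (Measure (RE (2 * k + 1))) := SkSet' V.P₁ V.P₂ k V.W

/-- The `P`-variables metric `d_M`. -/
def dM (V U : PVar) : ℝ :=
  ∑' k : ℕ, (2 : ℝ)⁻¹ ^ (k + 1) * dHLP (V.Sk (k + 1)) (U.Sk (k + 1))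

/-- Projection of `ℝ^{2k+1}` onto the even coordinates (positions `2, 4, …, 2k`). -/
def evenProj (k : ℕ) (x : RE (2 * k + 1)) : RE k :=
  (WithLp.equiv 2 (Fin k → ℝ)).symm fun i => x ⟨2 * (i : ℕ) + 1, by omega⟩

/-- `M_k`: probability measures on `ℝ^{2k+1}` whose marginal on the even coordinates
is supported on the standard basis vectors `e₁, …, e_k` of `ℝ^k`. -/
def Mk (k : ℕ) : Set (Measure (RE (2 * k + 1))) :=
  {μ | IsProbabilityMeasure μ ∧
    μ.map (evenProj k) {y : RE k | ∀ i : Fin k, y ≠ EuclideanSpace.single i 1} = 0}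

universe u₁ u₂ u₃ u₄

/-! ### Auxiliary lemmas -/

section Aux

open ENNReal

variable {Ω₁ : Type*} {Ω₂ : Type*} [MeasurableSpace Ω₁] [MeasurableSpace Ω₂]

lemma measurable_sVec {k : ℕ} {f : Fin k → Ω₁ → ℝ} {W : Ω₁ × Ω₁ × Ω₂ → ℝ}
    (hf : ∀ i, Measurable (f i)) (hW : Measurable W) : Measurable (sVec k f W) := by
  have H : Measurable fun (x : Ω₁ × Ω₁ × Ω₂) (i : Fin (2 * k + 1)) =>
      if _ : (i : ℕ) < 2 * k then
        if (i : ℕ) % 2 = 0 then f ⟨(i : ℕ) / 2, by omega⟩ x.1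
        else f ⟨(i : ℕ) / 2, by omega⟩ x.2.1
      else W x := by
    apply measurable_pi_lambda
    intro i
    by_cases h : (i : ℕ) < 2 * k
    · simp only [dif_pos h]
      by_cases h2 : (i : ℕ) % 2 = 0
      · simp only [if_pos h2]; exact (hf _).comp measurable_fst
      · simp only [if_neg h2]; exact (hf _).comp (measurable_fst.comp measurable_snd)
    · simpa only [dif_neg h] using hW
  exact (WithLp.measurable_toLp 2 _).comp H

lemma measurable_evenProj {k : ℕ} : Measurable (evenProj k) := by
  apply (WithLp.measurable_toLp 2 _).comp
  apply measurable_pi_lambda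
  intro i
  exact ((measurable_pi_apply _).comp (WithLp.measurable_ofLp 2 _))

lemma isProb_Smeasure {k : ℕ} (P₁ : Measure Ω₁) (P₂ : Measure Ω₂)
    [IsProbabilityMeasure P₁] [IsProbabilityMeasure P₂]
    {f : Fin k → Ω₁ → ℝ} {W : Ω₁ × Ω₁ × Ω₂ → ℝ}
    (hf : ∀ i, Measurable (f i)) (hW : Measurable W) :
    IsProbabilityMeasure (Smeasure P₁ P₂ f W) :=
  Measure.isProbabilityMeasure_map (measurable_sVec hf hW).aemeasurable

lemma coord_dist_le {n : ℕ} (x y : RE n) (i : Fin n) : dist (x i) (y i) ≤ dist x y := by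
  rw [EuclideanSpace.dist_eq]
  calc dist (x i) (y i) = Real.sqrt (dist (x i) (y i) ^ 2) := by
        rw [Real.sqrt_sq dist_nonneg]
    _ ≤ _ := Real.sqrt_le_sqrt <|
        Finset.single_le_sum (f := fun j => dist (x j) (y j) ^ 2)
          (fun j _ => sq_nonneg _) (Finset.mem_univ i)

lemma evenProj_lipschitz {k : ℕ} (z z' : RE (2 * k + 1)) :
    dist (evenProj k z) (evenProj k z') ≤ dist z z' := by
  rw [EuclideanSpace.dist_eq, EuclideanSpace.dist_eq]
  apply Real.sqrt_le_sqrt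
  have hinj : ∀ a ∈ Finset.univ, ∀ b ∈ Finset.univ,
      (fun i : Fin k => (⟨2 * (i : ℕ) + 1, by omega⟩ : Fin (2 * k + 1))) a
        = (fun i : Fin k => (⟨2 * (i : ℕ) + 1, by omega⟩ : Fin (2 * k + 1))) b → a = b := by
    intro a _ b _ h
    have := congrArg Fin.val h
    simp only at this
    exact Fin.ext (by omega)
  have := Finset.sum_image (s := (Finset.univ : Finset (Fin k)))
    (f := fun j : Fin (2 * k + 1) => dist (z j) (z' j) ^ 2) hinj
  have heq : ∑ i : Fin k, dist (evenProj k z i) (evenProj k z' i) ^ 2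
      = ∑ j ∈ Finset.image
          (fun i : Fin k => (⟨2 * (i : ℕ) + 1, by omega⟩ : Fin (2 * k + 1)))
          Finset.univ, dist (z j) (z' j) ^ 2 := by
    rw [this]
    simp only [evenProj, WithLp.equiv_symm_apply, WithLp.ofLp_toLp]
  rw [heq]
  exact Finset.sum_le_sum_of_subset_of_nonneg (Finset.subset_univ _)
    (fun j _ _ => sq_nonneg _)

lemma evenProj_sVec {k : ℕ} (f : Fin k → Ω₁ → ℝ) (W : Ω₁ × Ω₁ × Ω₂ → ℝ)
    (x : Ω₁ × Ω₁ × Ω₂) :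
    evenProj k (sVec k f W x)
      = (WithLp.equiv 2 (Fin k → ℝ)).symm (fun i => f i x.2.1) := by
  ext i
  simp only [evenProj, sVec, WithLp.equiv_symm_apply, WithLp.ofLp_toLp]
  have h1 : 2 * (i : ℕ) + 1 < 2 * k := by omega
  rw [dif_pos h1, if_neg (by omega)]
  congr 1
  exact Fin.ext (by simp; omega)

lemma lp_coupling {α : Type*} [MeasurableSpace α] {n : ℕ} (P : Measure α)
    {X Y : α → RE n} (hX : Measurable X) (hY : Measurable Y) {c : ℝ} (hc : 0 ≤ c)
    (h : P {a | c < dist (X a) (Y a)} ≤ ENNReal.ofReal c) :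
    levyProkhorovEDist (P.map X) (P.map Y) ≤ ENNReal.ofReal c := by
  apply levyProkhorovEDist_le_of_forall
  intro ε B hε hεtop hB
  have hc' : c < ε.toReal := (ENNReal.ofReal_lt_iff_lt_toReal hc hεtop.ne).mp hε
  have key : ∀ (Z V : α → RE n), Measurable Z → Measurable V →
      P {a | c < dist (Z a) (V a)} ≤ ENNReal.ofReal c →
      P.map Z B ≤ P.map V (Metric.thickening ε.toReal B) + ε := by
    intro Z V hZ hV hP
    rw [Measure.map_apply hZ hB,
      Measure.map_apply hV Metric.isOpen_thickening.measurableSet]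
    have hsub : Z ⁻¹' B ⊆ (V ⁻¹' Metric.thickening ε.toReal B)
        ∪ {a | c < dist (Z a) (V a)} := by
      intro a ha
      by_cases hd : c < dist (Z a) (V a)
      · exact Or.inr hd
      · exact Or.inl <| Metric.mem_thickening_iff.mpr
          ⟨Z a, ha, by rw [dist_comm]; push_neg at hd; linarith⟩
    calc P (Z ⁻¹' B)
        ≤ P (V ⁻¹' Metric.thickening ε.toReal B) + P {a | c < dist (Z a) (V a)} :=
          le_trans (measure_mono hsub) (measure_union_le _ _)
      _ ≤ _ := by exact add_le_add le_rfl (hP.trans hε.le)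
  refine ⟨key X Y hX hY h, key Y X hY hX ?_⟩
  have : {a | c < dist (Y a) (X a)} = {a | c < dist (X a) (Y a)} := by
    simp only [dist_comm]
  rw [this]; exact h

lemma mem_Sk_isProb (V : PVar) {k : ℕ} {μ : Measure (RE (2 * k + 1))}
    (hμ : μ ∈ V.Sk k) : IsProbabilityMeasure μ := by
  haveI := V.prob₁; haveI := V.prob₂
  obtain ⟨f, hf, _, rfl⟩ := hμ
  exact isProb_Smeasure _ _ hf V.meas

lemma Sk'_subset_Sk (V : PVar) (k : ℕ) : V.Sk' k ⊆ V.Sk k := by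
  rintro μ ⟨f, ⟨hm, h01, _⟩, rfl⟩
  refine ⟨f, hm, fun i x => ?_, rfl⟩
  rcases h01 i x with h | h <;> rw [h] <;> constructor <;> norm_num

lemma measurableSet_badRE (k : ℕ) :
    MeasurableSet {y : RE k | ∀ i : Fin k, y ≠ EuclideanSpace.single i 1} := by
  have : {y : RE k | ∀ i : Fin k, y ≠ EuclideanSpace.single i 1}
      = ⋂ i : Fin k, ({EuclideanSpace.single i 1} : Set (RE k))ᶜ := by
    ext y; simp
  rw [this]
  exact MeasurableSet.iInter fun i => (measurableSet_singleton _).compl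

lemma Sk'_subset_Mk (V : PVar) (k : ℕ) : V.Sk' k ⊆ Mk k := by
  haveI := V.prob₁; haveI := V.prob₂
  rintro μ ⟨f, ⟨hm, h01, hsum⟩, rfl⟩
  have hMset := measurableSet_badRE k
  refine ⟨isProb_Smeasure _ _ hm V.meas, ?_⟩
  unfold Smeasure
  rw [Measure.map_map measurable_evenProj (measurable_sVec hm V.meas),
    Measure.map_apply (measurable_evenProj.comp (measurable_sVec hm V.meas)) hMset]
  convert measure_empty
  · ext x
    simp only [mem_preimage, Function.comp_apply, mem_setOf_eq, mem_empty_iff_false,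
      iff_false, not_forall, not_not]
    -- find the index with f i x.2.1 = 1
    have hex : ∃ i : Fin k, f i x.2.1 = 1 := by
      by_contra hno
      push_neg at hno
      have hz : ∀ i : Fin k, f i x.2.1 = 0 := fun i =>
        (h01 i x.2.1).resolve_right (hno i)
      have hs := hsum x.2.1
      rw [Finset.sum_congr rfl fun i _ => hz i] at hs
      simp at hs
    obtain ⟨i, hi⟩ := hex
    refine ⟨i, ?_⟩
    have hzero : ∀ j : Fin k, j ≠ i → f j x.2.1 = 0 := by
      intro j hj
      have hs := hsum x.2.1
      rw [← Finset.add_sum_erase _ _ (Finset.mem_univ i), hi] at hs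
      have h0 : ∑ j ∈ Finset.univ.erase i, f j x.2.1 = 0 := by linarith
      have := (Finset.sum_eq_zero_iff_of_nonneg fun j _ => by
        rcases h01 j x.2.1 with h | h <;> rw [h] <;> norm_num).mp h0
      exact this j (Finset.mem_erase.mpr ⟨hj, Finset.mem_univ j⟩)
    rw [evenProj_sVec]
    ext j
    simp only [WithLp.equiv_symm_apply, WithLp.ofLp_toLp, EuclideanSpace.single_apply]
    by_cases hji : j = i
    · rw [if_pos hji, hji, hi]
    · rw [if_neg hji, hzero j hji]
  · infer_instance

lemma Sk_nonempty (V : PVar) (k : ℕ) : (V.Sk k).Nonempty :=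
  ⟨Smeasure V.P₁ V.P₂ (fun _ _ => (0 : ℝ)) V.W,
    fun _ _ => (0 : ℝ), fun _ => measurable_const,
    fun _ _ => by constructor <;> norm_num, rfl⟩

/-- The key rounding lemma: part (i) of the statement, with the explicit
choice `δ = ε / (8 * (k + 1))`. -/
lemma key_round {k : ℕ} (hk : 1 ≤ k) {ε : ℝ} (hε : 0 < ε) (V : PVar)
    {μ : Measure (RE (2 * k + 1))} (hμ : μ ∈ V.Sk k)
    (hclose : (⨅ ν ∈ Mk k, levyProkhorovEDist μ ν)
      ≤ ENNReal.ofReal (ε / (8 * (k + 1)))) :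
    ∃ μ₂ ∈ V.Sk' k, levyProkhorovDist μ μ₂ ≤ ε := by
  classical
  haveI := V.prob₁; haveI := V.prob₂
  set δ : ℝ := ε / (8 * (k + 1)) with hδdef
  have hδ : 0 < δ := by positivity
  obtain ⟨f, hf, hfb, rfl⟩ := hμ
  -- find ν ∈ Mk close to μ
  have hlt : (⨅ ν ∈ Mk k, levyProkhorovEDist (Smeasure V.P₁ V.P₂ f V.W) ν)
      < ENNReal.ofReal (2 * δ) :=
    lt_of_le_of_lt hclose (by
      rw [ENNReal.ofReal_lt_ofReal_iff (by positivity)]; linarith)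
  simp only [iInf_lt_iff] at hlt
  obtain ⟨ν, hνM, hνlt⟩ := hlt
  set r : ℝ := 4 * δ with hrdef
  set F : V.Ω₁ → RE k :=
    fun y => (WithLp.equiv 2 (Fin k → ℝ)).symm (fun i => f i y) with hF
  have hFm : Measurable F := by
    apply (WithLp.measurable_toLp 2 _).comp
    exact measurable_pi_lambda _ fun i => hf i
  -- bad set downstairs
  set Bad : Set V.Ω₁ :=
    {y | ∀ i : Fin k, r ≤ dist (F y) (EuclideanSpace.single i 1)} with hBad
  have hBadm : MeasurableSet Bad := by
    have : Bad = ⋂ i : Fin k,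
        {y | r ≤ dist (F y) (EuclideanSpace.single i 1)} := by ext y; simp [hBad]
    rw [this]
    exact MeasurableSet.iInter fun i =>
      measurableSet_le measurable_const (hFm.dist measurable_const)
  -- bad set upstairs
  set BsetZ : Set (RE (2 * k + 1)) :=
    {z | ∀ i : Fin k, r ≤ dist (evenProj k z) (EuclideanSpace.single i 1)} with hBsetZ
  have hBZm : MeasurableSet BsetZ := by
    have : BsetZ = ⋂ i : Fin k,
        {z | r ≤ dist (evenProj k z) (EuclideanSpace.single i 1)} := by
      ext z; simp [hBsetZ]
    rw [this]
    exact MeasurableSet.iInter fun i =>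
      measurableSet_le measurable_const (measurable_evenProj.dist measurable_const)
  -- μ of the upstairs bad set is small
  have hμB : Smeasure V.P₁ V.P₂ f V.W BsetZ ≤ ENNReal.ofReal (2 * δ) := by
    have h1 := left_measure_le_of_levyProkhorovEDist_lt hνlt hBZm
    have hth : ν (Metric.thickening (ENNReal.ofReal (2 * δ)).toReal BsetZ) = 0 := by
      apply measure_mono_null
        (t := evenProj k ⁻¹'
          {y : RE k | ∀ i : Fin k, y ≠ EuclideanSpace.single i 1})
      · intro z hz
        rw [ENNReal.toReal_ofReal (by positivity)] at hz
        obtain ⟨z', hz', hdzz⟩ := Metric.mem_thickening_iff.mp hz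
        intro i heq
        have h3 := hz' i
        have h4 : dist (evenProj k z') (EuclideanSpace.single i 1) ≤ dist z z' := by
          calc dist (evenProj k z') (EuclideanSpace.single i 1)
              = dist (evenProj k z') (evenProj k z) := by rw [heq]
            _ ≤ dist z' z := evenProj_lipschitz z' z
            _ = dist z z' := dist_comm _ _
        simp only [hrdef] at h3
        linarith
      · have h2 := hνM.2
        rwa [Measure.map_apply measurable_evenProj (measurableSet_badRE k)] at h2
    rw [hth, zero_add] at h1
    exact h1
  -- transfer to P₁
  have hPBad : V.P₁ Bad ≤ ENNReal.ofReal (2 * δ) := by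
    have hpre : sVec k f V.W ⁻¹' BsetZ = {x | x.2.1 ∈ Bad} := by
      ext x
      have hev := evenProj_sVec f V.W x
      simp only [mem_preimage, hBsetZ, hBad, mem_setOf_eq, hev, hF]
    have hSm : Smeasure V.P₁ V.P₂ f V.W BsetZ = V.P₁ Bad := by
      unfold Smeasure
      rw [Measure.map_apply (measurable_sVec hf V.meas) hBZm, hpre]
      have hrect : {x : V.Ω₁ × V.Ω₁ × V.Ω₂ | x.2.1 ∈ Bad}
          = (univ : Set V.Ω₁) ×ˢ (Bad ×ˢ (univ : Set V.Ω₂)) := by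
        ext x; simp [Set.mem_prod]
      rw [hrect, Measure.prod_prod, Measure.prod_prod, measure_univ, measure_univ,
        one_mul, mul_one]
    rwa [← hSm]
  -- the rounding map
  set i0 : Fin k := ⟨0, hk⟩ with hi0
  set p : V.Ω₁ → Fin k → Prop :=
    fun y i => dist (F y) (EuclideanSpace.single i 1) < r with hp
  set h : V.Ω₁ → Fin k := fun y => if hx : ∃ i, p y i then Fin.find (p y) hx else i0 with hh
  have hCm : ∀ i : Fin k, MeasurableSet {y | p y i} := fun i =>
    measurableSet_lt (hFm.dist measurable_const) measurable_const
  have hhm : Measurable h := by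
    apply measurable_to_countable'
    intro i
    have hset : h ⁻¹' {i}
        = ({y | p y i} ∩ ⋂ j : Fin k, {y | p y j → i ≤ j})
          ∪ ((⋂ j : Fin k, {y | p y j}ᶜ) ∩ {y : V.Ω₁ | i0 = i}) := by
      ext y
      simp only [mem_preimage, mem_singleton_iff, hh, mem_union, mem_inter_iff,
        mem_iInter, mem_setOf_eq, mem_compl_iff]
      by_cases hx : ∃ j, p y j
      swap
      · rw [dif_neg hx]
        have hfind : ∀ j, ¬ p y j := fun j hj => hx ⟨j, hj⟩
        constructor
        · rintro rfl
          exact Or.inr ⟨fun j => hfind j, rfl⟩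
        · rintro (⟨hpi, _⟩ | ⟨_, rfl⟩)
          · exact absurd hpi (hfind i)
          · rfl
      · rw [dif_pos hx]
        have hfind : p y (Fin.find (p y) hx) ∧ ∀ l, p y l → Fin.find (p y) hx ≤ l :=
          ⟨Fin.find_spec hx, fun l hl => Fin.find_le_of_pos hx hl⟩
        generalize Fin.find (p y) hx = j at hfind ⊢
        constructor
        · rintro rfl
          exact Or.inl ⟨hfind.1, fun l hl => hfind.2 l hl⟩
        · rintro (⟨hpi, hmin⟩ | ⟨hall, rfl⟩)
          · exact le_antisymm (hfind.2 i hpi) (hmin j hfind.1)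
          · exact absurd hfind.1 (hall j)
    rw [hset]
    apply MeasurableSet.union
    · refine (hCm i).inter (MeasurableSet.iInter fun j => ?_)
      by_cases hij : i ≤ j
      · have : {y | p y j → i ≤ j} = univ := by ext y; simp [hij]
        rw [this]; exact MeasurableSet.univ
      · have : {y | p y j → i ≤ j} = {y | p y j}ᶜ := by ext y; simp [hij]
        rw [this]; exact (hCm j).compl
    · refine (MeasurableSet.iInter fun j => (hCm j).compl).inter ?_
      by_cases hii : i0 = i
      · have : {y : V.Ω₁ | i0 = i} = univ := by ext y; simp [hii]
        rw [this]; exact MeasurableSet.univ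
      · have : {y : V.Ω₁ | i0 = i} = ∅ := by ext y; simp [hii]
        rw [this]; exact MeasurableSet.empty
  set g : Fin k → V.Ω₁ → ℝ := fun i y => if h y = i then 1 else 0 with hg
  have hgP : IsFunctionPartition g := by
    refine ⟨fun i => ?_, fun i y => ?_, fun y => ?_⟩
    · exact Measurable.ite (hhm (measurableSet_singleton i))
        measurable_const measurable_const
    · by_cases hi : h y = i
      · right; simp [hg, hi]
      · left; simp [hg, hi]
    · simp only [hg]
      rw [Finset.sum_ite_eq]
      simp
  -- rounding works outside Bad
  have hgood : ∀ y ∉ Bad, dist (F y) (EuclideanSpace.single (h y) 1) < r := by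
    intro y hy
    have hex : ∃ i, p y i := by
      simp only [hBad, mem_setOf_eq, not_forall, not_le] at hy
      exact hy
    simp only [hh, dif_pos hex]
    exact Fin.find_spec hex
  -- distance bound
  set c : ℝ := 8 * (k + 1) * δ with hc
  have hcε : c = ε := by
    rw [hc, hδdef]; field_simp
  have hc0 : 0 < c := by positivity
  have hfg : ∀ (i : Fin k), ∀ y ∉ Bad, dist (f i y) (g i y) ≤ r := by
    intro i y hy
    have h1 : g i y = EuclideanSpace.single (h y) 1 i := by
      simp only [hg, EuclideanSpace.single_apply]
      by_cases hhy : h y = i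
      · rw [if_pos hhy, if_pos hhy.symm]
      · rw [if_neg hhy, if_neg (Ne.symm hhy)]
    have h2 : f i y = F y i := by simp [hF]
    rw [h1, h2]
    exact le_of_lt (lt_of_le_of_lt
      (coord_dist_le (F y) (EuclideanSpace.single (h y) 1) i) (hgood y hy))
  have hdistb : ∀ x : V.Ω₁ × V.Ω₁ × V.Ω₂, x.1 ∉ Bad → x.2.1 ∉ Bad →
      dist (sVec k f V.W x) (sVec k g V.W x) ≤ c := by
    intro x h1 h2
    rw [EuclideanSpace.dist_eq]
    have hcoord : ∀ j : Fin (2 * k + 1),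
        dist (sVec k f V.W x j) (sVec k g V.W x j) ≤ r := by
      intro j
      simp only [sVec, WithLp.equiv_symm_apply, WithLp.ofLp_toLp]
      by_cases hj : (j : ℕ) < 2 * k
      · rw [dif_pos hj, dif_pos hj]
        by_cases hj2 : (j : ℕ) % 2 = 0
        · rw [if_pos hj2, if_pos hj2]
          exact hfg _ x.1 h1
        · rw [if_neg hj2, if_neg hj2]
          exact hfg _ x.2.1 h2
      · rw [dif_neg hj, dif_neg hj]
        simp only [dist_self]
        positivity
    have hsum : ∑ j : Fin (2 * k + 1),
        dist (sVec k f V.W x j) (sVec k g V.W x j) ^ 2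
          ≤ (2 * (k : ℝ) + 1) * r ^ 2 := by
      calc ∑ j : Fin (2 * k + 1), dist (sVec k f V.W x j) (sVec k g V.W x j) ^ 2
          ≤ ∑ _j : Fin (2 * k + 1), r ^ 2 :=
            Finset.sum_le_sum fun j _ => by
              have hcj := hcoord j
              have := dist_nonneg (x := sVec k f V.W x j) (y := sVec k g V.W x j)
              nlinarith
        _ = (2 * (k : ℝ) + 1) * r ^ 2 := by
            rw [Finset.sum_const, Finset.card_univ, Fintype.card_fin]
            push_cast; ring
    have hkr : (0:ℝ) ≤ (k:ℝ) := Nat.cast_nonneg k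
    calc Real.sqrt (∑ j : Fin (2 * k + 1),
            dist (sVec k f V.W x j) (sVec k g V.W x j) ^ 2)
        ≤ Real.sqrt (((2 * (k : ℝ) + 2) * r) ^ 2) := by
          apply Real.sqrt_le_sqrt
          nlinarith [sq_nonneg r]
      _ = (2 * (k : ℝ) + 2) * r := Real.sqrt_sq (by positivity)
      _ = c := by rw [hc, hrdef]; ring
  -- bad event bound
  have hbadev : (V.P₁.prod (V.P₁.prod V.P₂))
      {a | c < dist (sVec k f V.W a) (sVec k g V.W a)} ≤ ENNReal.ofReal c := by
    have hsub : {a | c < dist (sVec k f V.W a) (sVec k g V.W a)} ⊆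
        {a : V.Ω₁ × V.Ω₁ × V.Ω₂ | a.1 ∈ Bad} ∪ {a | a.2.1 ∈ Bad} := by
      intro a ha
      by_contra hcon
      simp only [mem_union, mem_setOf_eq, not_or] at hcon
      exact absurd ha (not_lt.mpr (hdistb a hcon.1 hcon.2))
    have h1 : (V.P₁.prod (V.P₁.prod V.P₂)) {a : V.Ω₁ × V.Ω₁ × V.Ω₂ | a.1 ∈ Bad}
        = V.P₁ Bad := by
      have : {a : V.Ω₁ × V.Ω₁ × V.Ω₂ | a.1 ∈ Bad}
          = Bad ×ˢ (univ : Set (V.Ω₁ × V.Ω₂)) := by ext a; simp [Set.mem_prod]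
      rw [this, Measure.prod_prod, measure_univ, mul_one]
    have h2 : (V.P₁.prod (V.P₁.prod V.P₂)) {a : V.Ω₁ × V.Ω₁ × V.Ω₂ | a.2.1 ∈ Bad}
        = V.P₁ Bad := by
      have : {a : V.Ω₁ × V.Ω₁ × V.Ω₂ | a.2.1 ∈ Bad}
          = (univ : Set V.Ω₁) ×ˢ (Bad ×ˢ (univ : Set V.Ω₂)) := by
        ext a; simp [Set.mem_prod]
      rw [this, Measure.prod_prod, Measure.prod_prod, measure_univ, measure_univ,
        one_mul, mul_one]
    calc (V.P₁.prod (V.P₁.prod V.P₂))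
          {a | c < dist (sVec k f V.W a) (sVec k g V.W a)}
        ≤ (V.P₁.prod (V.P₁.prod V.P₂)) ({a : V.Ω₁ × V.Ω₁ × V.Ω₂ | a.1 ∈ Bad}
            ∪ {a | a.2.1 ∈ Bad}) := measure_mono hsub
      _ ≤ (V.P₁.prod (V.P₁.prod V.P₂)) {a : V.Ω₁ × V.Ω₁ × V.Ω₂ | a.1 ∈ Bad}
            + (V.P₁.prod (V.P₁.prod V.P₂)) {a : V.Ω₁ × V.Ω₁ × V.Ω₂ | a.2.1 ∈ Bad} :=
            measure_union_le _ _
      _ = V.P₁ Bad + V.P₁ Bad := by rw [h1, h2]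
      _ ≤ ENNReal.ofReal (2 * δ) + ENNReal.ofReal (2 * δ) := add_le_add hPBad hPBad
      _ = ENNReal.ofReal (4 * δ) := by
            rw [← ENNReal.ofReal_add (by positivity) (by positivity)]; ring_nf
      _ ≤ ENNReal.ofReal c := by
            apply ENNReal.ofReal_le_ofReal
            rw [hc]
            have : (1:ℝ) ≤ (k:ℝ) + 1 := by
              have : (0:ℝ) ≤ (k:ℝ) := Nat.cast_nonneg k
              linarith
            nlinarith
  -- conclude via the coupling bound
  have hcoup := lp_coupling (V.P₁.prod (V.P₁.prod V.P₂))
    (measurable_sVec hf V.meas) (measurable_sVec hgP.1 V.meas) hc0.le hbadev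
  refine ⟨Smeasure V.P₁ V.P₂ g V.W, ⟨g, hgP, rfl⟩, ?_⟩
  unfold levyProkhorovDist
  calc (levyProkhorovEDist (Smeasure V.P₁ V.P₂ f V.W)
          (Smeasure V.P₁ V.P₂ g V.W)).toReal
      ≤ (ENNReal.ofReal c).toReal := ENNReal.toReal_mono ENNReal.ofReal_ne_top hcoup
    _ = c := ENNReal.toReal_ofReal hc0.le
    _ = ε := hcε

end Aux

/-- For each `ε > 0` and `k ≥ 1` there exists `δ > 0` such that:
(i) for every P-variable `W` and every `μ ∈ S_k(W)` with `d_LP(μ, M_k) ≤ δ` there is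
`μ₂ ∈ S'_k(W)` with `d_LP(μ, μ₂) ≤ ε`; and (ii) for any two P-variables `W, U` with
`d_H(S_k(W), S_k(U)) ≤ δ/2` one has
`d_H(S'_k(W), S'_k(U)) ≤ 2ε + d_H(S_k(W), S_k(U))`. -/
theorem exists_delta_partlem :
    ∀ ε > (0 : ℝ), ∀ k : ℕ, 1 ≤ k → ∃ δ > (0 : ℝ),
      (∀ V : PVar.{u₁, u₂}, ∀ μ ∈ V.Sk k,
        (⨅ ν ∈ Mk k, levyProkhorovEDist μ ν) ≤ ENNReal.ofReal δ →
        ∃ μ₂ ∈ V.Sk' k, levyProkhorovDist μ μ₂ ≤ ε) ∧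
      (∀ (V : PVar.{u₁, u₂}) (U : PVar.{u₃, u₄}),
        dHLP (V.Sk k) (U.Sk k) ≤ δ / 2 →
        dHLP (V.Sk' k) (U.Sk' k) ≤ 2 * ε + dHLP (V.Sk k) (U.Sk k)) := by
  intro ε hε k hk
  refine ⟨ε / (8 * (k + 1)), by positivity, ?_, ?_⟩
  · intro V μ hμ hclose
    exact key_round hk hε V hμ hclose
  · intro V U hVU
    set δ : ℝ := ε / (8 * (k + 1)) with hδdef
    have hδ : 0 < δ := by positivity
    have hδε : δ ≤ ε := by
      rw [hδdef]
      apply div_le_self hε.le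
      have : (0:ℝ) ≤ (k:ℝ) := Nat.cast_nonneg k
      linarith
    -- the Hausdorff edistance between the full profiles is at most 1
    have hE1 : eHausLP (V.Sk k) (U.Sk k) ≤ 1 := by
      unfold eHausLP
      apply max_le
      · apply iSup₂_le
        intro μ hμ
        obtain ⟨ν₀, hν₀⟩ := Sk_nonempty U k
        refine iInf₂_le_of_le ν₀ hν₀ ?_
        haveI := mem_Sk_isProb V hμ
        haveI := mem_Sk_isProb U hν₀
        calc levyProkhorovEDist μ ν₀ ≤ max (μ univ) (ν₀ univ) :=
              levyProkhorovEDist_le_max_measure_univ _ _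
          _ ≤ 1 := by simp
      · apply iSup₂_le
        intro ν hν
        obtain ⟨μ₀, hμ₀⟩ := Sk_nonempty V k
        refine iInf₂_le_of_le μ₀ hμ₀ ?_
        haveI := mem_Sk_isProb V hμ₀
        haveI := mem_Sk_isProb U hν
        calc levyProkhorovEDist μ₀ ν ≤ max (μ₀ univ) (ν univ) :=
              levyProkhorovEDist_le_max_measure_univ _ _
          _ ≤ 1 := by simp
    have hEtop : eHausLP (V.Sk k) (U.Sk k) ≠ ⊤ :=
      (lt_of_le_of_lt hE1 ENNReal.one_lt_top).ne
    have hEle : eHausLP (V.Sk k) (U.Sk k) ≤ ENNReal.ofReal (δ / 2) :=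
      (ENNReal.le_ofReal_iff_toReal_le hEtop (by positivity)).mpr hVU
    -- main bound on the Hausdorff edistance between the restricted profiles
    have hmain : eHausLP (V.Sk' k) (U.Sk' k) ≤ ENNReal.ofReal (δ + ε) := by
      unfold eHausLP
      apply max_le
      · apply iSup₂_le
        intro μ hμ'
        have hμSk : μ ∈ V.Sk k := Sk'_subset_Sk V k hμ'
        have hμMk : μ ∈ Mk k := Sk'_subset_Mk V k hμ'
        have hinf : (⨅ ν ∈ U.Sk k, levyProkhorovEDist μ ν)
            ≤ ENNReal.ofReal (δ / 2) := by
          refine le_trans (le_trans ?_ (le_max_left _ _)) hEle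
          exact le_iSup₂ (f := fun μ (_ : μ ∈ V.Sk k) =>
            ⨅ ν ∈ U.Sk k, levyProkhorovEDist μ ν) μ hμSk
        have hlt : (⨅ ν ∈ U.Sk k, levyProkhorovEDist μ ν) < ENNReal.ofReal δ :=
          lt_of_le_of_lt hinf (by
            rw [ENNReal.ofReal_lt_ofReal_iff hδ]; linarith)
        simp only [iInf_lt_iff] at hlt
        obtain ⟨ν, hνU, hνlt⟩ := hlt
        have hclose : (⨅ ρ ∈ Mk k, levyProkhorovEDist ν ρ) ≤ ENNReal.ofReal δ := by
          refine iInf₂_le_of_le μ hμMk ?_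
          rw [levyProkhorovEDist_comm]
          exact hνlt.le
        obtain ⟨ν₂, hν₂, hd⟩ := key_round hk hε U hνU hclose
        refine iInf₂_le_of_le ν₂ hν₂ ?_
        haveI := mem_Sk_isProb U hνU
        haveI := mem_Sk_isProb U (Sk'_subset_Sk U k hν₂)
        have hedist : levyProkhorovEDist ν ν₂ ≤ ENNReal.ofReal ε :=
          (ENNReal.le_ofReal_iff_toReal_le (levyProkhorovEDist_ne_top _ _) hε.le).mpr hd
        calc levyProkhorovEDist μ ν₂
            ≤ levyProkhorovEDist μ ν + levyProkhorovEDist ν ν₂ :=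
              levyProkhorovEDist_triangle _ _ _
          _ ≤ ENNReal.ofReal δ + ENNReal.ofReal ε := add_le_add hνlt.le hedist
          _ = ENNReal.ofReal (δ + ε) := by
              rw [ENNReal.ofReal_add hδ.le hε.le]
      · apply iSup₂_le
        intro ρ hρ'
        have hρSk : ρ ∈ U.Sk k := Sk'_subset_Sk U k hρ'
        have hρMk : ρ ∈ Mk k := Sk'_subset_Mk U k hρ'
        have hinf : (⨅ σ ∈ V.Sk k, levyProkhorovEDist σ ρ)
            ≤ ENNReal.ofReal (δ / 2) := by
          refine le_trans (le_trans ?_ (le_max_right _ _)) hEle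
          exact le_iSup₂ (f := fun ρ (_ : ρ ∈ U.Sk k) =>
            ⨅ σ ∈ V.Sk k, levyProkhorovEDist σ ρ) ρ hρSk
        have hlt : (⨅ σ ∈ V.Sk k, levyProkhorovEDist σ ρ) < ENNReal.ofReal δ :=
          lt_of_le_of_lt hinf (by
            rw [ENNReal.ofReal_lt_ofReal_iff hδ]; linarith)
        simp only [iInf_lt_iff] at hlt
        obtain ⟨σ, hσV, hσlt⟩ := hlt
        have hclose : (⨅ τ ∈ Mk k, levyProkhorovEDist σ τ) ≤ ENNReal.ofReal δ :=
          iInf₂_le_of_le ρ hρMk hσlt.le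
        obtain ⟨σ₂, hσ₂, hd⟩ := key_round hk hε V hσV hclose
        refine iInf₂_le_of_le σ₂ hσ₂ ?_
        haveI := mem_Sk_isProb V hσV
        haveI := mem_Sk_isProb V (Sk'_subset_Sk V k hσ₂)
        have hedist : levyProkhorovEDist σ₂ σ ≤ ENNReal.ofReal ε := by
          rw [levyProkhorovEDist_comm]
          exact (ENNReal.le_ofReal_iff_toReal_le
            (levyProkhorovEDist_ne_top _ _) hε.le).mpr hd
        calc levyProkhorovEDist σ₂ ρ
            ≤ levyProkhorovEDist σ₂ σ + levyProkhorovEDist σ ρ :=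
              levyProkhorovEDist_triangle _ _ _
          _ ≤ ENNReal.ofReal ε + ENNReal.ofReal δ := add_le_add hedist hσlt.le
          _ = ENNReal.ofReal (δ + ε) := by
              rw [← ENNReal.ofReal_add hε.le hδ.le, add_comm]
    have hfinal : dHLP (V.Sk' k) (U.Sk' k) ≤ δ + ε := by
      unfold dHLP
      calc (eHausLP (V.Sk' k) (U.Sk' k)).toReal
          ≤ (ENNReal.ofReal (δ + ε)).toReal :=
            ENNReal.toReal_mono ENNReal.ofReal_ne_top hmain
        _ = δ + ε := ENNReal.toReal_ofReal (by positivity)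
    have hnn : (0:ℝ) ≤ dHLP (V.Sk k) (U.Sk k) := ENNReal.toReal_nonneg
    linarith

end
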